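/- arXiv:2209.08862 — 6 statements merged into one kernel-verified Lean document; each statement's English description precedes it below -/
import Mathlib

section
/- Let a : ℕ → ℝ be nonnegative with ∑_{i=0}^∞ (i+1)(i+r+1) a_i < ∞ for some r ≥ 0. Then k³ · (min_{0 ≤ i ≤ k} a_i) → 0 as k → ∞. -/
open Filter Finset Topology

theorem stmt_2 (a : ℕ → ℝ) (ha : ∀ i, 0 ≤ a i) (r : ℝ) (hr : 0 ≤ r)
    (hsum : Summable fun i : ℕ => ((i : ℝ) + 1) * ((i : ℝ) + r + 1) * a i) :
    Filter.Tendsto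
      (fun k : ℕ => (k : ℝ) ^ 3 * (Finset.range (k + 1)).inf' Finset.nonempty_range_add_one a)
      Filter.atTop (nhds 0) := by
  set b : ℕ → ℝ := fun i => ((i : ℝ) + 1) ^ 2 * a i with hbdef
  have hb0 : ∀ i, 0 ≤ b i := fun i => mul_nonneg (by positivity) (ha i)
  have hbs : Summable b := by
    apply hsum.of_nonneg_of_le hb0
    intro i
    have hi : (0:ℝ) ≤ (i:ℝ) + 1 := by positivity
    have h2 : ((i:ℝ)+1) ≤ (i:ℝ) + r + 1 := by linarith
    have : b i = ((i:ℝ)+1) * ((i:ℝ)+1) * a i := by ring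
    rw [this]
    exact mul_le_mul_of_nonneg_right (mul_le_mul_of_nonneg_left h2 hi) (ha i)
  have htail : Tendsto (fun n => ∑' i, b (i + n)) atTop (𝓝 0) := by
    exact_mod_cast tendsto_sum_nat_add b
  have hcomp : Tendsto (fun k : ℕ => 8 * ∑' i, b (i + (k/2 + 1))) atTop (𝓝 0) := by
    have h1 : Tendsto (fun k : ℕ => k/2 + 1) atTop atTop :=
      tendsto_atTop_atTop.mpr (fun n => ⟨2*n, fun m hm => by omega⟩)
    simpa using (htail.comp h1).const_mul (8:ℝ)
  apply squeeze_zero ?_ ?_ hcomp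
  · intro k
    have hm0 : 0 ≤ (Finset.range (k + 1)).inf' Finset.nonempty_range_add_one a :=
      Finset.le_inf' _ _ (fun i _ => ha i)
    positivity
  · intro k
    set n := k / 2 with hn
    set m := (Finset.range (k + 1)).inf' Finset.nonempty_range_add_one a with hm
    have hm0 : 0 ≤ m := Finset.le_inf' _ _ (fun i _ => ha i)
    have hmle : ∀ i ∈ Finset.Ioc n k, (((n:ℝ)+1)^2 * m) ≤ b i := by
      intro i hi
      simp only [Finset.mem_Ioc] at hi
      have h1 : m ≤ a i := Finset.inf'_le a (by simp [Finset.mem_range]; omega)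
      have h2 : ((n:ℝ)+1) ≤ ((i:ℝ)+1) := by
        have : (n:ℝ) ≤ (i:ℝ) := by exact_mod_cast Nat.le_of_lt_succ (Nat.lt_succ_of_lt hi.1)
        linarith
      have h3 : (0:ℝ) ≤ (n:ℝ)+1 := by positivity
      have h4 : ((n:ℝ)+1)^2 ≤ ((i:ℝ)+1)^2 := by nlinarith
      calc ((n:ℝ)+1)^2 * m ≤ ((n:ℝ)+1)^2 * a i := by
              exact mul_le_mul_of_nonneg_left h1 (by positivity)
        _ ≤ ((i:ℝ)+1)^2 * a i := mul_le_mul_of_nonneg_right h4 (ha i)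
    have hS1 : ((k - n : ℕ):ℝ) * (((n:ℝ)+1)^2 * m) ≤ ∑ i ∈ Finset.Ioc n k, b i := by
      have := Finset.card_nsmul_le_sum (Finset.Ioc n k) b (((n:ℝ)+1)^2 * m) hmle
      rwa [Nat.card_Ioc, nsmul_eq_mul] at this
    have hS2 : ∑ i ∈ Finset.Ioc n k, b i ≤ ∑' i, b (i + (n + 1)) := by
      have hrw : ∑ i ∈ Finset.Ioc n k, b i = ∑ j ∈ Finset.range (k - n), b (j + (n+1)) := by
        rw [← Finset.Ico_add_one_add_one_eq_Ioc, Finset.sum_Ico_eq_sum_range]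
        simp only [Nat.add_sub_add_right]
        exact Finset.sum_congr rfl (fun j _ => by rw [show n + 1 + j = j + (n+1) by omega])
      rw [hrw]
      exact Summable.sum_le_tsum _ (fun j _ => hb0 _) ((summable_nat_add_iff (n+1)).2 hbs)
    have hkn : (k:ℝ) ≤ 2 * ((k - n : ℕ):ℝ) := by
      have : k ≤ 2 * (k - n) := by omega
      exact_mod_cast this
    have hkn2 : (k:ℝ) ≤ 2 * ((n:ℝ) + 1) := by
      have h : k ≤ 2*n + 1 := by omega
      have : (k:ℝ) ≤ ((2*n + 1 : ℕ):ℝ) := Nat.cast_le.2 h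
      push_cast at this; linarith
    have hk0 : (0:ℝ) ≤ (k:ℝ) := Nat.cast_nonneg k
    have key : (k:ℝ)^3 * m ≤ 8 * (((k - n : ℕ):ℝ) * (((n:ℝ)+1)^2 * m)) := by
      have hc0 : (0:ℝ) ≤ 2 * ((k - n : ℕ):ℝ) := by positivity
      have e1 : (k:ℝ)^2 ≤ (2*((n:ℝ)+1))^2 := by nlinarith
      have e2 : (k:ℝ)^3 ≤ (2*((k - n : ℕ):ℝ)) * (2*((n:ℝ)+1))^2 := by
        have := mul_le_mul hkn e1 (sq_nonneg (k:ℝ)) hc0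
        nlinarith [this]
      nlinarith [mul_le_mul_of_nonneg_right e2 hm0]
    calc (k:ℝ)^3 * m ≤ 8 * (((k - n : ℕ):ℝ) * (((n:ℝ)+1)^2 * m)) := key
      _ ≤ 8 * ∑ i ∈ Finset.Ioc n k, b i := by linarith
      _ ≤ 8 * ∑' i, b (i + (n + 1)) := by linarith
end

section
/- Let b : ℕ → ℝ be nonnegative with ∑_{i=0}^∞ i · b_i < ∞. Then k² · (min_{0 ≤ i ≤ k} b_i) → 0 as k → ∞. -/
theorem stmt_3 (b : ℕ → ℝ) (hb : ∀ i, 0 ≤ b i)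
    (hsum : Summable fun i : ℕ => (i : ℝ) * b i) :
    Filter.Tendsto
      (fun k : ℕ => (k : ℝ) ^ 2 * (Finset.range (k + 1)).inf' Finset.nonempty_range_add_one b)
      Filter.atTop (nhds 0) := by
  set f : ℕ → ℝ := fun i => (i : ℝ) * b i with hf
  have hfnn : ∀ i, 0 ≤ f i := fun i => mul_nonneg (Nat.cast_nonneg i) (hb i)
  have hm0 : ∀ k : ℕ, 0 ≤ (Finset.range (k + 1)).inf' Finset.nonempty_range_add_one b := by
    intro k
    exact Finset.le_inf' _ _ (fun i _ => hb i)
  have key : ∀ k : ℕ, (k : ℝ) ^ 2 * (Finset.range (k + 1)).inf' Finset.nonempty_range_add_one b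
      ≤ 4 * ∑ i ∈ Finset.Ioc (k / 2) k, f i := by
    intro k
    set m := (Finset.range (k + 1)).inf' Finset.nonempty_range_add_one b with hm
    have hk2 : ((k / 2 : ℕ) : ℝ) ≤ (k : ℝ) / 2 := by
      rw [le_div_iff₀ (by norm_num : (0:ℝ) < 2)]
      have := Nat.div_mul_le_self k 2
      exact_mod_cast this
    have hterm : ∀ i ∈ Finset.Ioc (k / 2) k, (k : ℝ) / 2 * m ≤ f i := by
      intro i hi
      rw [Finset.mem_Ioc] at hi
      have hik : (k : ℝ) / 2 ≤ (i : ℝ) := by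
        have h1 : k ≤ 2 * (k / 2) + 1 := by omega
        have h2 : k / 2 + 1 ≤ i := hi.1
        have : (k : ℝ) ≤ 2 * ((k / 2 : ℕ) : ℝ) + 1 := by exact_mod_cast h1
        have : (k : ℝ) / 2 ≤ ((k / 2 : ℕ) : ℝ) + 1 := by linarith
        calc (k : ℝ) / 2 ≤ ((k / 2 : ℕ) : ℝ) + 1 := this
          _ ≤ (i : ℝ) := by exact_mod_cast h2
      have hbm : m ≤ b i := Finset.inf'_le _ (Finset.mem_range.mpr (by omega))
      calc (k : ℝ) / 2 * m ≤ (i : ℝ) * m := by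
            apply mul_le_mul_of_nonneg_right hik (hm0 k)
        _ ≤ (i : ℝ) * b i := by
            apply mul_le_mul_of_nonneg_left hbm (Nat.cast_nonneg i)
    have hsumlb : (Finset.Ioc (k / 2) k).card • ((k : ℝ) / 2 * m) ≤
        ∑ i ∈ Finset.Ioc (k / 2) k, f i := Finset.card_nsmul_le_sum _ _ _ hterm
    have hcard : (Finset.Ioc (k / 2) k).card = k - k / 2 := Nat.card_Ioc _ _
    have hcard2 : (k : ℝ) / 2 ≤ ((Finset.Ioc (k / 2) k).card : ℝ) := by
      rw [hcard]
      have : ((k - k / 2 : ℕ) : ℝ) = (k : ℝ) - ((k / 2 : ℕ) : ℝ) := by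
        have : k / 2 ≤ k := Nat.div_le_self k 2
        push_cast [this]
        ring
      rw [this]
      linarith
    have h1 : (k : ℝ) / 2 * ((k : ℝ) / 2 * m) ≤ ∑ i ∈ Finset.Ioc (k / 2) k, f i := by
      calc (k : ℝ) / 2 * ((k : ℝ) / 2 * m)
          ≤ ((Finset.Ioc (k / 2) k).card : ℝ) * ((k : ℝ) / 2 * m) := by
            apply mul_le_mul_of_nonneg_right hcard2
            exact mul_nonneg (by positivity) (hm0 k)
        _ = (Finset.Ioc (k / 2) k).card • ((k : ℝ) / 2 * m) := by
            rw [nsmul_eq_mul]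
        _ ≤ _ := hsumlb
    nlinarith [h1]
  have htail : Filter.Tendsto (fun k : ℕ => ∑ i ∈ Finset.Ioc (k / 2) k, f i)
      Filter.atTop (nhds 0) := by
    rw [Metric.tendsto_atTop]
    intro ε hε
    obtain ⟨s, hs⟩ := hsum.vanishing (Metric.ball_mem_nhds 0 hε)
    refine ⟨2 * (s.sup id) + 2, fun k hk => ?_⟩
    have hdisj : Disjoint (Finset.Ioc (k / 2) k) s := by
      rw [Finset.disjoint_left]
      intro i hi his
      rw [Finset.mem_Ioc] at hi
      have : i ≤ s.sup id := Finset.le_sup (f := id) his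
      omega
    have := hs _ hdisj
    rw [Metric.mem_ball] at this
    simpa [Real.dist_eq] using this
  have hupper : Filter.Tendsto (fun k : ℕ => 4 * ∑ i ∈ Finset.Ioc (k / 2) k, f i)
      Filter.atTop (nhds 0) := by
    have := htail.const_mul (4 : ℝ)
    simpa using this
  refine tendsto_of_tendsto_of_tendsto_of_le_of_le tendsto_const_nhds hupper ?_ ?_
  · intro k
    exact mul_nonneg (by positivity) (hm0 k)
  · intro k
    exact key k
end

section
/- Let f ∈ F_L^1(ℝ^d) (L-smooth convex) and 0 < s ≤ 1/L, r ≥ 2. Define the NAG iterates x_k = y_{k-1} - s∇f(y_{k-1}), y_k = x_k + ((k-1)/(k+r))(x_k - x_{k-1}) with x_0 = y_0. Define v_{k-1} = (y_k - y_{k-1})/√s and the Lyapunov function E(k) = s·k·(k+r)(f(y_{k-1}) - f(x*)) + (1/2)‖√s·k·v_{k-1} + r(y_k - x*) + s·k·∇f(y_{k-1})‖². Then E(k+1) ≤ E(k) for all k ≥ 1. -/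
set_option maxHeartbeats 1000000

open Set RealInnerProductSpace

section aux

variable {E : Type*} [NormedAddCommGroup E] [InnerProductSpace ℝ E] [CompleteSpace E]

lemma hasDerivAt_line (f : E → ℝ) (g : E → E) (hg : ∀ z, HasGradientAt f (g z) z)
    (a b : E) (t : ℝ) :
    HasDerivAt (fun τ : ℝ => f (a + τ • (b - a))) ⟪g (a + t • (b - a)), b - a⟫ t := by
  have h1 : HasDerivAt (fun τ : ℝ => a + τ • (b - a)) (b - a) t := by
    simpa using ((hasDerivAt_id t).smul_const (b - a)).const_add a
  have h2 := (hg (a + t • (b - a))).hasFDerivAt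
  have h3 := h2.comp_hasDerivAt t h1
  simp at h3
  exact h3

lemma quad_upper (f : E → ℝ) (g : E → E) (L : ℝ) (hL : 0 ≤ L)
    (hg : ∀ z, HasGradientAt f (g z) z)
    (hlip : ∀ z w, ‖g z - g w‖ ≤ L * ‖z - w‖) (a b : E) :
    f b ≤ f a + ⟪g a, b - a⟫ + L / 2 * ‖b - a‖ ^ 2 := by
  set c := b - a with hc
  set ψ : ℝ → ℝ := fun t => f (a + t • c) - t * ⟪g a, c⟫ - L / 2 * t ^ 2 * ‖c‖ ^ 2 with hψ
  have hd : ∀ t : ℝ, HasDerivAt ψ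
      (⟪g (a + t • c), c⟫ - ⟪g a, c⟫ - L * t * ‖c‖ ^ 2) t := by
    intro t
    have h1 := hasDerivAt_line f g hg a b t
    have h2 : HasDerivAt (fun t : ℝ => t * ⟪g a, c⟫) ⟪g a, c⟫ t := by
      simpa using (hasDerivAt_id t).mul_const ⟪g a, c⟫
    have h3 : HasDerivAt (fun t : ℝ => L / 2 * t ^ 2 * ‖c‖ ^ 2) (L * t * ‖c‖ ^ 2) t := by
      have := ((hasDerivAt_pow 2 t).const_mul (L / 2)).mul_const (‖c‖ ^ 2)
      refine this.congr_deriv ?_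
      ring
    exact (h1.sub h2).sub h3
  have hmono : AntitoneOn ψ (Set.Icc 0 1) := by
    apply antitoneOn_of_deriv_nonpos (convex_Icc 0 1)
    · exact fun t _ => ((hd t).continuousAt).continuousWithinAt
    · exact fun t _ => ((hd t).differentiableAt).differentiableWithinAt
    · intro t ht
      rw [interior_Icc] at ht
      rw [(hd t).deriv]
      have hb1 : ⟪g (a + t • c) - g a, c⟫ ≤ ‖g (a + t • c) - g a‖ * ‖c‖ :=
        real_inner_le_norm _ _
      have hb2 : ‖g (a + t • c) - g a‖ ≤ L * (t * ‖c‖) := by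
        have := hlip (a + t • c) a
        simpa [norm_smul, abs_of_pos ht.1] using this
      have hcn : (0:ℝ) ≤ ‖c‖ := norm_nonneg _
      rw [inner_sub_left] at hb1
      nlinarith [mul_le_mul_of_nonneg_right hb2 hcn]
  have h01 := hmono (Set.mem_Icc.mpr ⟨le_refl 0, zero_le_one⟩)
      (Set.mem_Icc.mpr ⟨zero_le_one, le_refl 1⟩) zero_le_one
  have e0 : a + (0:ℝ) • c = a := by simp
  have e1 : a + (1:ℝ) • c = b := by simp [hc]
  simp only [hψ, e0, e1] at h01
  nlinarith [h01]

lemma convex_lower (f : E → ℝ) (g : E → E) (hconv : ConvexOn ℝ Set.univ f)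
    (hg : ∀ z, HasGradientAt f (g z) z) (z w : E) :
    f z + ⟪g z, w - z⟫ ≤ f w := by
  set h : ℝ → ℝ := fun t => f (z + t • (w - z)) with hh
  have hconvh : ConvexOn ℝ (Set.univ : Set ℝ) h := by
    have := hconv.comp_affineMap (AffineMap.lineMap z w : ℝ →ᵃ[ℝ] E)
    have heq : (f ∘ (AffineMap.lineMap z w : ℝ →ᵃ[ℝ] E)) = h := by
      funext t
      simp [hh, AffineMap.lineMap_apply_module]
      ring_nf
      congr 1
      module
    rw [heq] at this
    simpa using this
  have hder : HasDerivAt h ⟪g z, w - z⟫ 0 := by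
    have := hasDerivAt_line f g hg z w 0
    simpa using this
  have := hconvh.le_slope_of_hasDerivAt (Set.mem_univ 0) (Set.mem_univ 1) one_pos hder
  rw [slope_def_field] at this
  have h0 : h 0 = f z := by simp [hh]
  have h1 : h 1 = f w := by simp [hh]
  rw [h0, h1] at this
  linarith [this]

lemma coco (f : E → ℝ) (g : E → E) (L : ℝ) (hL : 0 < L)
    (hconv : ConvexOn ℝ Set.univ f)
    (hg : ∀ z, HasGradientAt f (g z) z)
    (hlip : ∀ z w, ‖g z - g w‖ ≤ L * ‖z - w‖) (z w : E) :
    f z + ⟪g z, w - z⟫ + 1 / (2 * L) * ‖g w - g z‖ ^ 2 ≤ f w := by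
  set φ : E → ℝ := fun u => f u - ⟪g z, u⟫ with hφ
  set gφ : E → E := fun u => g u - g z with hgφ
  have hgφ' : ∀ u, HasGradientAt φ (gφ u) u := by
    intro u
    rw [hasGradientAt_iff_hasFDerivAt]
    have h1 := (hg u).hasFDerivAt
    have h2 : HasFDerivAt (fun u : E => ⟪g z, u⟫)
        (InnerProductSpace.toDual ℝ E (g z) : E →L[ℝ] ℝ) u :=
      (InnerProductSpace.toDual ℝ E (g z)).hasFDerivAt
    have h3 := h1.sub h2
    refine h3.congr_fderiv ?_
    simp [hgφ]
  have hlipφ : ∀ u u', ‖gφ u - gφ u'‖ ≤ L * ‖u - u'‖ := by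
    intro u u'
    simpa [hgφ, sub_sub_sub_cancel_right] using hlip u u'
  have hminφ : ∀ u, φ z ≤ φ u := by
    intro u
    have := convex_lower f g hconv hg z u
    simp only [hφ]
    have : f z + ⟪g z, u - z⟫ ≤ f u := this
    rw [inner_sub_right] at this
    linarith
  have hstep := quad_upper φ gφ L hL.le hgφ' hlipφ w (w - L⁻¹ • gφ w)
  have hmin2 := hminφ (w - L⁻¹ • gφ w)
  rw [show w - L⁻¹ • gφ w - w = -(L⁻¹ • gφ w) by abel] at hstep
  rw [inner_neg_right, real_inner_smul_right, real_inner_self_eq_norm_sq, norm_neg,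
    norm_smul, Real.norm_eq_abs, abs_of_pos (inv_pos.mpr hL)] at hstep
  have hL' : L ≠ 0 := hL.ne'
  have hkey : φ z ≤ φ w - 1 / (2 * L) * ‖gφ w‖ ^ 2 := by
    calc φ z ≤ φ (w - L⁻¹ • gφ w) := hmin2
    _ ≤ φ w + -(L⁻¹ * ‖gφ w‖ ^ 2) + L / 2 * (L⁻¹ * ‖gφ w‖) ^ 2 := hstep
    _ = φ w - 1 / (2 * L) * ‖gφ w‖ ^ 2 := by field_simp; ring
  simp only [hφ, hgφ] at hkey
  rw [inner_sub_right] at *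
  linarith [hkey]

lemma grad_zero (f : E → ℝ) (g : E → E) (hg : ∀ z, HasGradientAt f (g z) z)
    (xs : E) (hmin : ∀ z, f xs ≤ f z) : g xs = 0 := by
  have hloc : IsLocalMin f xs := Filter.Eventually.of_forall hmin
  have := hloc.hasFDerivAt_eq_zero (hg xs).hasFDerivAt
  have h2 : InnerProductSpace.toDual ℝ E (g xs) = 0 := this
  have := (InnerProductSpace.toDual ℝ E).map_zero
  have hinj := (InnerProductSpace.toDual ℝ E).injective
  apply hinj
  rw [h2, map_zero]

end aux

theorem stmt_5 {d : ℕ} (f : EuclideanSpace ℝ (Fin d) → ℝ)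
    (g : EuclideanSpace ℝ (Fin d) → EuclideanSpace ℝ (Fin d)) (L : ℝ) (hL : 0 < L)
    (hconv : ConvexOn ℝ Set.univ f)
    (hgrad : ∀ z, HasGradientAt f (g z) z)
    (hlip : ∀ z w, ‖g z - g w‖ ≤ L * ‖z - w‖)
    (xs : EuclideanSpace ℝ (Fin d)) (hmin : ∀ z, f xs ≤ f z)
    (s r : ℝ) (hs : 0 < s) (hsL : s ≤ 1 / L) (hr : 2 ≤ r)
    (x y : ℕ → EuclideanSpace ℝ (Fin d))
    (hx0 : x 0 = y 0)
    (hx : ∀ k : ℕ, x (k + 1) = y k - s • g (y k))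
    (hy : ∀ k : ℕ, y (k + 1) = x (k + 1) + (((k : ℝ)) / ((k : ℝ) + r + 1)) • (x (k + 1) - x k))
    (v : ℕ → EuclideanSpace ℝ (Fin d))
    (hv : ∀ k : ℕ, v k = (Real.sqrt s)⁻¹ • (y (k + 1) - y k)) :
    ∀ k : ℕ,
      s * ((k : ℝ) + 2) * ((k : ℝ) + 2 + r) * (f (y (k + 1)) - f xs) +
          (1 / 2) * ‖(Real.sqrt s * ((k : ℝ) + 2)) • v (k + 1) + r • (y (k + 2) - xs) +
              (s * ((k : ℝ) + 2)) • g (y (k + 1))‖ ^ 2 ≤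
        s * ((k : ℝ) + 1) * ((k : ℝ) + 1 + r) * (f (y k) - f xs) +
          (1 / 2) * ‖(Real.sqrt s * ((k : ℝ) + 1)) • v k + r • (y (k + 1) - xs) +
              (s * ((k : ℝ) + 1)) • g (y k)‖ ^ 2 := by
  intro k
  have hκ : (0:ℝ) ≤ (k:ℝ) := Nat.cast_nonneg k
  have hsne : Real.sqrt s ≠ 0 := ne_of_gt (Real.sqrt_pos.mpr hs)
  have e1 : (Real.sqrt s * ((k:ℝ) + 1)) • v k = ((k:ℝ) + 1) • (y (k+1) - y k) := by
    rw [hv, smul_smul]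
    congr 1
    field_simp
  have e2 : (Real.sqrt s * ((k:ℝ) + 2)) • v (k+1) = ((k:ℝ) + 2) • (y (k+2) - y (k+1)) := by
    rw [hv, smul_smul]
    congr 1
    field_simp
  rw [e1, e2]
  -- the key vector identity
  have hq : ((k:ℝ) + 2) • (y (k+2) - y (k+1)) + r • (y (k+2) - xs) +
        (s * ((k:ℝ) + 2)) • g (y (k+1))
      = (((k:ℝ) + 1) • (y (k+1) - y k) + r • (y (k+1) - xs) + (s * ((k:ℝ) + 1)) • g (y k))
        - (s * (((k:ℝ) + 1) + r)) • g (y (k+1)) := by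
    have h1 : x (k+1) = y k - s • g (y k) := hx k
    have h2 : x (k+2) = y (k+1) - s • g (y (k+1)) := hx (k+1)
    have h3 : y (k+2) = x (k+2) + (((k:ℝ)+1) / (((k:ℝ)+1) + r + 1)) • (x (k+2) - x (k+1)) := by
      have := hy (k+1)
      push_cast at this
      convert this using 3
    have hden : ((k:ℝ)+1) + r + 1 ≠ 0 := by nlinarith
    rw [h3, h2, h1]
    match_scalars <;> field_simp <;> ring
  rw [hq]
  set p := ((k:ℝ) + 1) • (y (k+1) - y k) + r • (y (k+1) - xs) + (s * ((k:ℝ) + 1)) • g (y k)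
    with hp
  set gb := g (y (k+1)) with hgb
  set t := s * (((k:ℝ) + 1) + r) with ht
  have hexp : ‖p - t • gb‖ ^ 2 = ‖p‖ ^ 2 - 2 * t * ⟪p, gb⟫ + t ^ 2 * ‖gb‖ ^ 2 := by
    rw [norm_sub_sq_real, real_inner_smul_right, norm_smul, mul_pow, Real.norm_eq_abs, sq_abs]
    ring
  -- inner product of p with gb
  have hPB : ⟪p, gb⟫ = ((k:ℝ) + 1) * ⟪y (k+1) - y k, gb⟫ + r * ⟪y (k+1) - xs, gb⟫ +
      (s * ((k:ℝ) + 1)) * ⟪g (y k), gb⟫ := by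
    rw [hp, inner_add_left, inner_add_left, real_inner_smul_left, real_inner_smul_left,
      real_inner_smul_left]
  set A := ⟪y (k+1) - y k, gb⟫ with hA
  set B := ⟪y (k+1) - xs, gb⟫ with hB
  set C := ⟪g (y k), gb⟫ with hC
  set G := ‖gb‖ ^ 2 with hG
  set Ga := ‖g (y k)‖ ^ 2 with hGa
  set D := ‖g (y k) - gb‖ ^ 2 with hD
  -- basic inequalities
  have hLs : s * L ≤ 1 := by
    rw [le_div_iff₀ hL] at hsL
    linarith
  have hgxs : g xs = 0 := grad_zero f g hgrad xs hmin
  have hFb : 0 ≤ f (y (k+1)) - f xs := by linarith [hmin (y (k+1))]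
  have hG0 : 0 ≤ G := sq_nonneg _
  have hGa0 : 0 ≤ Ga := sq_nonneg _
  have hD0 : 0 ≤ D := sq_nonneg _
  -- cocoercivity 1 : z = y(k+1), w = y k
  have hc1 : A ≥ (f (y (k+1)) - f (y k)) + s / 2 * D := by
    have h := coco f g L hL hconv hgrad hlip (y (k+1)) (y k)
    rw [← hgb] at h
    have hinner : ⟪gb, y k - y (k+1)⟫ = -A := by
      rw [hA, real_inner_comm]
      rw [show y k - y (k+1) = -(y (k+1) - y k) by abel, inner_neg_left]
    rw [hinner] at h
    have hnorm : ‖g (y k) - gb‖ ^ 2 = D := rfl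
    rw [hnorm] at h
    have hhalf : s / 2 * D ≤ 1 / (2 * L) * D := by
      apply mul_le_mul_of_nonneg_right _ hD0
      rw [div_le_div_iff₀ (by norm_num) (by positivity)]
      nlinarith
    linarith [h]
  -- cocoercivity 2 : z = y(k+1), w = xs
  have hc2 : B ≥ (f (y (k+1)) - f xs) + s / 2 * G := by
    have h := coco f g L hL hconv hgrad hlip (y (k+1)) xs
    rw [← hgb] at h
    have hinner : ⟪gb, xs - y (k+1)⟫ = -B := by
      rw [hB, real_inner_comm]
      rw [show xs - y (k+1) = -(y (k+1) - xs) by abel, inner_neg_left]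
    rw [hinner, hgxs] at h
    have hn : ‖(0:EuclideanSpace ℝ (Fin d)) - gb‖ ^ 2 = G := by rw [zero_sub, norm_neg]
    rw [hn] at h
    have hhalf : s / 2 * G ≤ 1 / (2 * L) * G := by
      apply mul_le_mul_of_nonneg_right _ hG0
      rw [div_le_div_iff₀ (by norm_num) (by positivity)]
      nlinarith
    linarith [h]
  -- polarization
  have hpol : D = Ga - 2 * C + G := by
    rw [hD, norm_sub_sq_real, hGa, hC, hG]
  -- lower bound on ⟪p, gb⟫
  have hPBlow : ⟪p, gb⟫ ≥ ((k:ℝ) + 1) * ((f (y (k+1)) - f (y k)) + s / 2 * D) +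
      r * ((f (y (k+1)) - f xs) + s / 2 * G) +
      (s * ((k:ℝ) + 1)) * ((Ga + G - D) / 2) := by
    rw [hPB]
    have hcC : C = (Ga + G - D) / 2 := by rw [hpol]; ring
    rw [hcC]
    have m1 := mul_le_mul_of_nonneg_left hc1 (by linarith : (0:ℝ) ≤ (k:ℝ) + 1)
    have m2 := mul_le_mul_of_nonneg_left hc2 (by linarith : (0:ℝ) ≤ r)
    linarith
  -- put it together
  rw [hexp]
  have ht0 : 0 ≤ t := by rw [ht]; positivity
  have hmul := mul_le_mul_of_nonneg_left hPBlow ht0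
  have hFbc : 0 ≤ s * (((((k:ℝ)+1) + r) ^ 2 - (((k:ℝ)+1) + 1) * ((((k:ℝ)+1) + 1) + r)) *
      (f (y (k+1)) - f xs)) := by
    apply mul_nonneg hs.le
    apply mul_nonneg _ hFb
    nlinarith [mul_nonneg (sub_nonneg.mpr hr) hκ]
  have hGac : 0 ≤ s ^ 2 * (((k:ℝ)+1) + r) * ((k:ℝ)+1) * Ga := by positivity
  rw [ht] at hmul ⊢
  linarith [hmul, hFbc, hGac]
end

section
/- Under NAG with L-smooth convex f, 0 < s ≤ 1/L and r > 2, one has lim_{k→∞} k² · (min_{0 ≤ i ≤ k} f(y_i) - f(x*)) = 0. -/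
open Set Filter

section NAGhelpers

variable {E : Type*} [NormedAddCommGroup E] [InnerProductSpace ℝ E] [CompleteSpace E]

local notation "⟪" x ", " y "⟫" => @inner ℝ _ _ x y

/-- derivative of t ↦ f (u + t • (v - u)) -/
lemma line_hasDerivAt (f : E → ℝ) (g : E → E) (hgrad : ∀ z, HasGradientAt f (g z) z)
    (u v : E) (t : ℝ) :
    HasDerivAt (fun t : ℝ => f (u + t • (v - u))) ⟪g (u + t • (v - u)), v - u⟫ t := by
  have hc : HasDerivAt (fun t : ℝ => u + t • (v - u)) (v - u) t := by
    simpa using ((hasDerivAt_id t).smul_const (v - u)).const_add u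
  have hf := (hgrad (u + t • (v - u))).hasFDerivAt
  have := hf.comp_hasDerivAt t hc
  simpa [Function.comp_def] using this

/-- (A) gradient inequality for convex f -/
lemma grad_ineq (f : E → ℝ) (g : E → E) (hconv : ConvexOn ℝ Set.univ f)
    (hgrad : ∀ z, HasGradientAt f (g z) z) (u v : E) :
    f u + ⟪g u, v - u⟫ ≤ f v := by
  set φ : ℝ → ℝ := fun t => f (u + t • (v - u)) with hφ
  have hφconv : ConvexOn ℝ Set.univ φ := by
    have h1 := hconv.comp_affineMap (AffineMap.lineMap u v : ℝ →ᵃ[ℝ] E)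
    have h2 : (f ∘ (AffineMap.lineMap u v : ℝ →ᵃ[ℝ] E)) = φ := by
      funext t
      simp [φ, AffineMap.lineMap_apply, add_comm]
    rw [h2] at h1
    simpa using h1
  have hd : HasDerivAt φ ⟪g u, v - u⟫ 0 := by
    simpa using line_hasDerivAt f g hgrad u v 0
  have := hφconv.le_slope_of_hasDerivAt (Set.mem_univ (0:ℝ)) (Set.mem_univ (1:ℝ))
    one_pos hd
  rw [slope_def_field] at this
  simp [φ] at this
  linarith [this]

/-- (B) descent lemma -/
lemma descent_lemma (f : E → ℝ) (g : E → E) (L : ℝ) (hL : 0 < L)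
    (hgrad : ∀ z, HasGradientAt f (g z) z)
    (hlip : ∀ z w, ‖g z - g w‖ ≤ L * ‖z - w‖) (u v : E) :
    f v ≤ f u + ⟪g u, v - u⟫ + L / 2 * ‖v - u‖ ^ 2 := by
  have hgcont : Continuous g := by
    have : LipschitzWith (Real.toNNReal L) g := by
      apply LipschitzWith.of_dist_le_mul
      intro z w
      rw [dist_eq_norm, dist_eq_norm]
      exact (hlip z w).trans (by rw [Real.coe_toNNReal _ hL.le])
    exact this.continuous
  set c : ℝ → E := fun t => u + t • (v - u) with hc
  have hccont : Continuous c := by fun_prop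
  set φ' : ℝ → ℝ := fun t => ⟪g (c t), v - u⟫ with hφ'
  have hφ'cont : Continuous φ' := by
    apply Continuous.inner (hgcont.comp hccont) continuous_const
  have hftc : ∫ t in (0:ℝ)..1, φ' t = f (u + (1:ℝ) • (v - u)) - f (u + (0:ℝ) • (v - u)) :=
    intervalIntegral.integral_eq_sub_of_hasDerivAt
      (fun t _ => line_hasDerivAt f g hgrad u v t) (hφ'cont.intervalIntegrable 0 1)
  have e1 : u + (1:ℝ) • (v - u) = v := by module
  have e0 : u + (0:ℝ) • (v - u) = u := by module
  rw [e1, e0] at hftc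
  have hbound : ∫ t in (0:ℝ)..1, φ' t ≤ ∫ t in (0:ℝ)..1, (⟪g u, v - u⟫ + L * ‖v - u‖ ^ 2 * t) := by
    apply intervalIntegral.integral_mono_on zero_le_one (hφ'cont.intervalIntegrable 0 1)
      (by apply Continuous.intervalIntegrable; fun_prop)
    intro t ht
    have h1 : φ' t - ⟪g u, v - u⟫ = ⟪g (c t) - g u, v - u⟫ := by
      simp [φ', inner_sub_left]
    have h2 : ⟪g (c t) - g u, v - u⟫ ≤ ‖g (c t) - g u‖ * ‖v - u‖ :=
      real_inner_le_norm _ _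
    have h3 : ‖g (c t) - g u‖ ≤ L * (t * ‖v - u‖) := by
      have := hlip (c t) u
      simpa [c, norm_smul, abs_of_nonneg ht.1] using this
    nlinarith [norm_nonneg (v - u), norm_nonneg (g (c t) - g u), ht.1,
      mul_le_mul_of_nonneg_right h3 (norm_nonneg (v - u))]
  have hint : ∫ t in (0:ℝ)..1, (⟪g u, v - u⟫ + L * ‖v - u‖ ^ 2 * t)
      = ⟪g u, v - u⟫ + L / 2 * ‖v - u‖ ^ 2 := by
    rw [intervalIntegral.integral_add (intervalIntegrable_const)
      (by apply Continuous.intervalIntegrable; fun_prop)]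
    rw [intervalIntegral.integral_const_mul, integral_id]
    simp
    ring
  linarith [hbound.trans_eq hint, hftc]

/-- (C) gradient vanishes at a global minimizer -/
lemma grad_min_zero (f : E → ℝ) (g : E → E) (hgrad : ∀ z, HasGradientAt f (g z) z)
    (xs : E) (hmin : ∀ z, f xs ≤ f z) : g xs = 0 := by
  have hloc : IsLocalMin f xs := Filter.Eventually.of_forall hmin
  have h0 := hloc.hasFDerivAt_eq_zero (hgrad xs).hasFDerivAt
  have : (InnerProductSpace.toDual ℝ E) (g xs) = 0 := h0
  simpa using (InnerProductSpace.toDual ℝ E).map_eq_zero_iff.mp this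

/-- (D) slack inequality at minimizer -/
lemma slack_ineq (f : E → ℝ) (g : E → E) (L : ℝ) (hL : 0 < L)
    (hconv : ConvexOn ℝ Set.univ f)
    (hgrad : ∀ z, HasGradientAt f (g z) z)
    (hlip : ∀ z w, ‖g z - g w‖ ≤ L * ‖z - w‖)
    (xs : E) (hmin : ∀ z, f xs ≤ f z)
    (s : ℝ) (hs : 0 < s) (hsL : s * L ≤ 1) (w : E) :
    f w + ⟪g w, xs - w⟫ + s / 2 * ‖g w‖ ^ 2 ≤ f xs := by
  have hg0 : g xs = 0 := grad_min_zero f g hgrad xs hmin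
  have h1 := descent_lemma f g L hL hgrad hlip xs (xs + s • g w)
  rw [hg0] at h1
  simp only [inner_zero_left, add_zero, add_sub_cancel_left] at h1
  have h2 := grad_ineq f g hconv hgrad w (xs + s • g w)
  have e2 : ⟪g w, xs + s • g w - w⟫ = ⟪g w, xs - w⟫ + s * ‖g w‖ ^ 2 := by
    have : xs + s • g w - w = (xs - w) + s • g w := by module
    rw [this, inner_add_right, real_inner_smul_right, real_inner_self_eq_norm_sq]
  rw [e2] at h2
  have e3 : ‖s • g w‖ ^ 2 = s ^ 2 * ‖g w‖ ^ 2 := by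
    rw [norm_smul]; simp [mul_pow, sq_abs]
  rw [e3] at h1
  nlinarith [mul_nonneg (mul_nonneg (sub_nonneg.2 hsL) hs.le) (sq_nonneg (‖g w‖))]

/-- (E) scalar one-step energy inequality -/
lemma step_scalar (a T δ δ' U P R Z Z' : ℝ) (ha : 0 < a) (hT : 1 ≤ T) (hδ : 0 ≤ δ) (hU : 0 ≤ U)
    (hZ' : Z' = Z - 2 * T * (P + (T - 1) * R) + T ^ 2 * U)
    (h1 : δ' ≤ δ + a * R - a * U / 2) (h2 : δ' ≤ a * P - a * U) :
    T ^ 2 * δ' + Z' / (2 * a⁻¹) ≤ T * (T - 1) * δ + Z / (2 * a⁻¹) - T * U / (2 * a⁻¹) := by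
  have ha' : a⁻¹ > 0 := inv_pos.2 ha
  have hstep : a * (T ^ 2 * δ') + a * (Z' / (2 * a⁻¹)) ≤
      a * (T * (T - 1) * δ) + a * (Z / (2 * a⁻¹)) - a * (T * U / (2 * a⁻¹)) := by
    have e : ∀ W : ℝ, a * (W / (2 * a⁻¹)) = a ^ 2 * W / 2 := by
      intro W; field_simp
    rw [e, e, e, hZ']
    have k1 : T * (T - 1) * δ' ≤ T * (T - 1) * (δ + a * R - a * U / 2) :=
      mul_le_mul_of_nonneg_left h1 (by nlinarith)
    have k2 : T * δ' ≤ T * (a * P - a * U) :=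
      mul_le_mul_of_nonneg_left h2 (by linarith)
    nlinarith [mul_nonneg (mul_nonneg ha.le (by linarith : (0:ℝ) ≤ T)) hU,
      mul_nonneg ha.le (mul_nonneg (by linarith : (0:ℝ) ≤ T) hU)]
  have := (mul_le_mul_iff_right₀ ha).mp (by linarith : a * (T ^ 2 * δ' + Z' / (2 * a⁻¹)) ≤
      a * (T * (T - 1) * δ + Z / (2 * a⁻¹) - T * U / (2 * a⁻¹)))
  linarith

end NAGhelpers

section NAGmain

local notation "⟪" x ", " y "⟫" => @inner ℝ _ _ x y

set_option maxHeartbeats 2000000 in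
theorem stmt_10 {d : ℕ} (f : EuclideanSpace ℝ (Fin d) → ℝ)
    (g : EuclideanSpace ℝ (Fin d) → EuclideanSpace ℝ (Fin d)) (L : ℝ) (hL : 0 < L)
    (hconv : ConvexOn ℝ Set.univ f)
    (hgrad : ∀ z, HasGradientAt f (g z) z)
    (hlip : ∀ z w, ‖g z - g w‖ ≤ L * ‖z - w‖)
    (xs : EuclideanSpace ℝ (Fin d)) (hmin : ∀ z, f xs ≤ f z)
    (s r : ℝ) (hs : 0 < s) (hsL : s ≤ 1 / L) (hr : 2 < r)
    (x y : ℕ → EuclideanSpace ℝ (Fin d))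
    (hx0 : x 0 = y 0)
    (hx : ∀ k : ℕ, x (k + 1) = y k - s • g (y k))
    (hy : ∀ k : ℕ, y (k + 1) = x (k + 1) + (((k : ℝ)) / ((k : ℝ) + r + 1)) • (x (k + 1) - x k)) :
    Filter.Tendsto
      (fun k : ℕ => (k : ℝ) ^ 2 *
        (Finset.range (k + 1)).inf' Finset.nonempty_range_add_one (fun i => f (y i) - f xs))
      Filter.atTop (nhds 0) := by
  have hsL' : s * L ≤ 1 := by
    rw [le_div_iff₀ hL] at hsL; linarith
  have hr0 : (0:ℝ) < r := by linarith
  have hrne : r ≠ 0 := ne_of_gt hr0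
  have hr2 : (0:ℝ) < r - 2 := by linarith
  have hr2ne : r - 2 ≠ 0 := ne_of_gt hr2
  have hsne : s ≠ 0 := ne_of_gt hs
  have hLs : L ≤ s⁻¹ := by
    rw [← one_div, le_div_iff₀ hs]; linarith
  set δ : ℕ → ℝ := fun k => f (x k) - f xs with hδdef
  set A : ℕ → ℝ := fun k => f (y k) - f xs with hAdef
  set u : ℕ → EuclideanSpace ℝ (Fin d) := fun k => s • g (y k) with hudef
  set U : ℕ → ℝ := fun k => ‖u k‖ ^ 2 with hUdef
  have hδ0 : ∀ k, 0 ≤ δ k := fun k => sub_nonneg.2 (hmin _)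
  have hA0 : ∀ k, 0 ≤ A k := fun k => sub_nonneg.2 (hmin _)
  have hU0 : ∀ k, 0 ≤ U k := fun k => sq_nonneg _
  have hxu : ∀ k, x (k+1) = y k - u k := fun k => hx k
  have hgu : ∀ k (w : EuclideanSpace ℝ (Fin d)), ⟪g (y k), w⟫ = s⁻¹ * ⟪u k, w⟫ := by
    intro k w
    show ⟪g (y k), w⟫ = s⁻¹ * ⟪s • g (y k), w⟫
    rw [real_inner_smul_left]
    field_simp
  have hUg : ∀ k, ‖g (y k)‖ ^ 2 = s⁻¹ * s⁻¹ * U k := by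
    intro k
    show ‖g (y k)‖ ^ 2 = s⁻¹ * s⁻¹ * ‖s • g (y k)‖ ^ 2
    rw [norm_smul, Real.norm_eq_abs, abs_of_nonneg hs.le, mul_pow]
    field_simp
  -- descent step consequence
  have hdesc : ∀ k, f (x (k+1)) ≤ f (y k) - s⁻¹ * U k / 2 := by
    intro k
    have h := descent_lemma f g L hL hgrad hlip (y k) (x (k+1))
    rw [hxu k] at h
    have e1 : y k - u k - y k = -(u k) := by module
    rw [e1] at h
    have e2 : ⟪g (y k), -(u k)⟫ = -(s⁻¹ * U k) := by
      rw [hgu k]; rw [inner_neg_right, real_inner_self_eq_norm_sq]; ring_nf; rfl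
    have e3 : ‖-(u k)‖ ^ 2 = U k := by rw [norm_neg]
    rw [e2, e3] at h
    have : L / 2 * U k ≤ s⁻¹ / 2 * U k := by
      apply mul_le_mul_of_nonneg_right _ (hU0 k)
      linarith
    rw [hxu k] at *
    linarith
  have ineq1 : ∀ k, δ (k+1) ≤ δ k + s⁻¹ * ⟪u k, y k - x k⟫ - s⁻¹ * U k / 2 := by
    intro k
    have h2 := grad_ineq f g hconv hgrad (y k) (x k)
    have e : ⟪g (y k), x k - y k⟫ = -(s⁻¹ * ⟪u k, y k - x k⟫) := by
      rw [hgu k]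
      rw [show x k - y k = -(y k - x k) by module, inner_neg_right]
      ring
    rw [e] at h2
    have := hdesc k
    simp only [hδdef]
    linarith
  have ineq2 : ∀ k, δ (k+1) ≤ s⁻¹ * ⟪u k, y k - xs⟫ - s⁻¹ * U k := by
    intro k
    have h2 := slack_ineq f g L hL hconv hgrad hlip xs hmin s hs hsL' (y k)
    have e : ⟪g (y k), xs - y k⟫ = -(s⁻¹ * ⟪u k, y k - xs⟫) := by
      rw [hgu k]
      rw [show xs - y k = -(y k - xs) by module, inner_neg_right]
      ring
    have e2 : s / 2 * ‖g (y k)‖ ^ 2 = s⁻¹ * U k / 2 := by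
      rw [hUg k]; field_simp
    rw [e, e2] at h2
    have := hdesc k
    simp only [hδdef]
    linarith
  have hakey : ∀ k, A k ≤ δ (k+1) + s⁻¹ * U k := by
    intro k
    have h := grad_ineq f g hconv hgrad (y k) (x (k+1))
    have e : ⟪g (y k), x (k+1) - y k⟫ = -(s⁻¹ * U k) := by
      rw [hgu k, hxu k, show y k - u k - y k = -(u k) by module, inner_neg_right,
        real_inner_self_eq_norm_sq]
      ring
    rw [e] at h
    simp only [hAdef, hδdef]
    linarith
  -- energy machinery
  set T : ℕ → ℝ := fun k => ((k:ℝ) + r) / r with hTdef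
  set z : ℕ → EuclideanSpace ℝ (Fin d) :=
    fun k => T k • y k - (T k - 1) • x k - xs with hzdef
  have hT1 : ∀ k, 1 ≤ T k := by
    intro k
    rw [hTdef]
    rw [le_div_iff₀ hr0]
    have : (0:ℝ) ≤ (k:ℝ) := Nat.cast_nonneg k
    linarith
  have hznext : ∀ k, z (k+1) = z k - T k • u k := by
    intro k
    have hpos : ((k:ℝ) + r + 1) ≠ 0 := by positivity
    have hcoef : T (k+1) * ((k:ℝ) / ((k:ℝ) + r + 1)) = (k:ℝ) / r := by
      rw [hTdef]
      push_cast
      field_simp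
      ring
    simp only [hzdef]
    rw [hy k, hxu k]
    rw [smul_add, smul_smul, hcoef]
    have hT2 : T (k+1) = ((k:ℝ) + 1 + r) / r := by rw [hTdef]; push_cast; ring
    rw [hT2, hTdef]
    match_scalars <;> field_simp <;> ring
  have hinner : ∀ k, ⟪u k, z k⟫ =
      ⟪u k, y k - xs⟫ + (T k - 1) * ⟪u k, y k - x k⟫ := by
    intro k
    have hz' : z k = (y k - xs) + (T k - 1) • (y k - x k) := by
      simp only [hzdef]; module
    rw [hz', inner_add_right, real_inner_smul_right]
  have hZexp : ∀ k, ‖z (k+1)‖ ^ 2 = ‖z k‖ ^ 2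
      - 2 * T k * (⟪u k, y k - xs⟫ + (T k - 1) * ⟪u k, y k - x k⟫)
      + (T k) ^ 2 * U k := by
    intro k
    rw [hznext k]
    rw [@norm_sub_sq_real]
    rw [real_inner_smul_right, real_inner_comm, hinner k]
    rw [norm_smul, Real.norm_eq_abs, mul_pow, sq_abs]
    ring
  set Energy : ℕ → ℝ :=
    fun k => (((k:ℝ) + r - 1) / r) ^ 2 * δ k + ‖z k‖ ^ 2 / (2 * s) with hEdef
  set c : ℕ → ℝ := fun k => (((k:ℝ) + r - 1) / r) ^ 2 - T k * (T k - 1) with hcdef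
  have hstep : ∀ k, Energy (k+1) + c k * δ k
      + T k * U k / (2 * s) ≤ Energy k := by
    intro k
    have h := step_scalar s⁻¹ (T k) (δ k) (δ (k+1)) (U k)
      (⟪u k, y k - xs⟫) (⟪u k, y k - x k⟫) (‖z k‖ ^ 2) (‖z (k+1)‖ ^ 2)
      (inv_pos.2 hs) (hT1 k) (hδ0 k) (hU0 k) (hZexp k) (ineq1 k) (ineq2 k)
    rw [inv_inv] at h
    have hE1 : Energy (k+1) = (T k) ^ 2 * δ (k+1) + ‖z (k+1)‖ ^ 2 / (2 * s) := by
      rw [hEdef, hTdef]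
      push_cast
      ring_nf
    rw [hE1, hEdef, hcdef]
    dsimp only
    linarith
  have hc_eq : ∀ k, c k = ((r - 2) * k + (r - 1) ^ 2) / r ^ 2 := by
    intro k
    rw [hcdef, hTdef]
    field_simp
    ring
  have hc0 : ∀ k, 0 ≤ c k := by
    intro k
    rw [hc_eq]
    apply div_nonneg _ (by positivity)
    have : (0:ℝ) ≤ (k:ℝ) := Nat.cast_nonneg k
    nlinarith
  have hEnonneg : ∀ n, 0 ≤ Energy n := by
    intro n
    rw [hEdef]
    have := hδ0 n
    positivity
  have hterm0 : ∀ k, 0 ≤ c k * δ k + T k * U k / (2 * s) := by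
    intro k
    have h1 : 0 ≤ c k * δ k := mul_nonneg (hc0 k) (hδ0 k)
    have h2 : 0 ≤ T k * U k / (2 * s) := by
      apply div_nonneg (mul_nonneg (by linarith [hT1 k]) (hU0 k)) (by linarith)
    exact add_nonneg h1 h2
  clear_value δ A u U T z Energy c
  have hcsum : ∀ n, ∑ k ∈ Finset.range n, (c k * δ k + T k * U k / (2 * s)) + Energy n
      ≤ Energy 0 := by
    intro n
    induction n with
    | zero => simp
    | succ n ih =>
      rw [Finset.sum_range_succ]
      have := hstep n
      linarith
  have hcsum' : ∀ n, ∑ k ∈ Finset.range n, (c k * δ k + T k * U k / (2 * s)) ≤ Energy 0 := by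
    intro n
    have h1 := hcsum n
    have h2 := hEnonneg n
    linarith
  have hsum_cδ : ∀ n, ∑ k ∈ Finset.range n, c k * δ k ≤ Energy 0 := by
    intro n
    refine le_trans ?_ (hcsum' n)
    apply Finset.sum_le_sum
    intro k _
    have h2 : 0 ≤ T k * U k / (2 * s) :=
      div_nonneg (mul_nonneg (by linarith [hT1 k]) (hU0 k)) (by linarith)
    linarith
  have hsum_TU : ∀ n, ∑ k ∈ Finset.range n, T k * U k / (2 * s) ≤ Energy 0 := by
    intro n
    refine le_trans ?_ (hcsum' n)
    apply Finset.sum_le_sum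
    intro k _
    have := mul_nonneg (hc0 k) (hδ0 k)
    linarith
  -- the weighted y-gap sequence
  set W : ℕ → ℝ := fun k => ((k:ℝ) + 1) * A k with hWdef
  have hW0 : ∀ k, 0 ≤ W k := by
    intro k
    exact mul_nonneg (by positivity) (hA0 k)
  have hK1pos : (0:ℝ) < r ^ 2 / (r - 2) := by
    apply div_pos (by positivity) (by linarith)
  have hWbound : ∀ k, W k ≤ (r ^ 2 / (r - 2)) * (c (k+1) * δ (k+1))
      + (2 * r) * (T k * U k / (2 * s)) := by
    intro k
    have hK1 : ((k:ℝ) + 1) ≤ (r ^ 2 / (r - 2)) * c (k+1) := by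
      have he : (r ^ 2 / (r - 2)) * c (k+1) = ((k:ℝ) + 1) + (r - 1) ^ 2 / (r - 2) := by
        rw [hc_eq]
        push_cast
        field_simp
      rw [he]
      have : 0 ≤ (r - 1) ^ 2 / (r - 2) := div_nonneg (sq_nonneg _) (by linarith)
      linarith
    have hd1 : ((k:ℝ) + 1) * δ (k+1) ≤ (r ^ 2 / (r - 2)) * (c (k+1) * δ (k+1)) := by
      rw [← mul_assoc]
      exact mul_le_mul_of_nonneg_right hK1 (hδ0 (k+1))
    have he2 : (2 * r) * (T k * U k / (2 * s)) = ((k:ℝ) + r) * U k / s := by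
      simp only [hTdef]
      field_simp
    have hd2 : ((k:ℝ) + 1) * (s⁻¹ * U k) ≤ (2 * r) * (T k * U k / (2 * s)) := by
      rw [he2]
      rw [show ((k:ℝ) + 1) * (s⁻¹ * U k) = ((k:ℝ) + 1) * U k / s by field_simp]
      have hkr : ((k:ℝ) + 1) * U k ≤ ((k:ℝ) + r) * U k :=
        mul_le_mul_of_nonneg_right (by linarith) (hU0 k)
      exact (div_le_div_iff_of_pos_right hs).mpr hkr
    have hAk := hakey k
    have hm := mul_le_mul_of_nonneg_left hAk (by positivity : (0:ℝ) ≤ (k:ℝ) + 1)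
    rw [mul_add] at hm
    simp only [hWdef]
    linarith
  have hWsum_bound : ∀ n, ∑ k ∈ Finset.range n, W k
      ≤ (r ^ 2 / (r - 2)) * Energy 0 + (2 * r) * Energy 0 := by
    intro n
    have h1 : ∑ k ∈ Finset.range n, W k ≤
        ∑ k ∈ Finset.range n, ((r ^ 2 / (r - 2)) * (c (k+1) * δ (k+1))
          + (2 * r) * (T k * U k / (2 * s))) :=
      Finset.sum_le_sum (fun k _ => hWbound k)
    rw [Finset.sum_add_distrib, ← Finset.mul_sum, ← Finset.mul_sum] at h1
    have h2 : ∑ k ∈ Finset.range n, c (k+1) * δ (k+1) ≤ Energy 0 := by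
      have e := Finset.sum_range_succ' (fun k => c k * δ k) n
      have h3 := hsum_cδ (n+1)
      have h4 : 0 ≤ c 0 * δ 0 := mul_nonneg (hc0 0) (hδ0 0)
      rw [e] at h3
      linarith
    have h5 := hsum_TU n
    have hK2 : (0:ℝ) ≤ 2 * r := by linarith
    nlinarith [mul_le_mul_of_nonneg_left h2 hK1pos.le, mul_le_mul_of_nonneg_left h5 hK2]
  have hWsummable : Summable W := summable_of_sum_range_le hW0 hWsum_bound
  have htail : Filter.Tendsto (fun m => ∑' i, W (i + m)) Filter.atTop (nhds 0) :=
    tendsto_sum_nat_add W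
  set B : ℕ → ℝ :=
    fun k => (Finset.range (k+1)).inf' Finset.nonempty_range_add_one A with hBdef
  have hB0 : ∀ k, 0 ≤ B k := fun k => Finset.le_inf' _ _ (fun i _ => hA0 i)
  have hBle : ∀ k i, i ≤ k → B k ≤ A i := fun k i hik =>
    Finset.inf'_le A (Finset.mem_range.2 (Nat.lt_succ_of_le hik))
  have hkey : ∀ k : ℕ, 1 ≤ k → (k:ℝ) ^ 2 * B k ≤ 4 * ∑' i, W (i + k / 2) := by
    intro k hk
    set m := k / 2 with hm
    have hm_le : m ≤ k := Nat.div_le_self k 2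
    have hsummable' : Summable (fun i => W (i + m)) :=
      (summable_nat_add_iff m).mpr hWsummable
    have hsum1 : (∑ i ∈ Finset.Icc m k, ((i:ℝ) + 1)) * B k ≤ ∑ i ∈ Finset.Icc m k, W i := by
      rw [Finset.sum_mul]
      apply Finset.sum_le_sum
      intro i hi
      rw [Finset.mem_Icc] at hi
      have h0 : (0:ℝ) ≤ (i:ℝ) + 1 := by positivity
      calc ((i:ℝ) + 1) * B k ≤ ((i:ℝ) + 1) * A i :=
            mul_le_mul_of_nonneg_left (hBle k i hi.2) h0
        _ = W i := by simp only [hWdef]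
    have htailge : ∑ i ∈ Finset.Icc m k, W i ≤ ∑' i, W (i + m) := by
      have e : ∑ i ∈ Finset.Icc m k, W i = ∑ j ∈ Finset.range (k + 1 - m), W (j + m) := by
        rw [show Finset.Icc m k = Finset.Ico m (k+1) from by rw [Finset.Ico_add_one_right_eq_Icc]]
        rw [Finset.sum_Ico_eq_sum_range]
        apply Finset.sum_congr rfl
        intro j _
        rw [add_comm]
      rw [e]
      exact Summable.sum_le_tsum _ (fun i _ => hW0 _) hsummable'
    have hmn : 2 * m ≤ k ∧ k ≤ 2 * m + 1 := by omega
    have hcast : ((k + 1 - m : ℕ) : ℝ) = (k:ℝ) + 1 - (m:ℝ) := by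
      have : m ≤ k + 1 := by omega
      push_cast [Nat.cast_sub this]
      ring
    have hmr1 : 2 * (m:ℝ) ≤ (k:ℝ) := by exact_mod_cast Nat.cast_le.mpr hmn.1
    have hmr2 : (k:ℝ) ≤ 2 * (m:ℝ) + 1 := by exact_mod_cast Nat.cast_le.mpr hmn.2
    have hcard : ((k:ℝ)) ^ 2 / 4 ≤ ∑ i ∈ Finset.Icc m k, ((i:ℝ) + 1) := by
      have hlb : ∀ i ∈ Finset.Icc m k, ((m:ℝ) + 1) ≤ (i:ℝ) + 1 := by
        intro i hi
        rw [Finset.mem_Icc] at hi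
        have : (m:ℝ) ≤ (i:ℝ) := by exact_mod_cast hi.1
        linarith
      have hcs := Finset.card_nsmul_le_sum (Finset.Icc m k) (fun i => (i:ℝ) + 1)
        ((m:ℝ) + 1) hlb
      rw [Nat.card_Icc, nsmul_eq_mul, hcast] at hcs
      have hmnn : (0:ℝ) ≤ (m:ℝ) := Nat.cast_nonneg m
      nlinarith [mul_nonneg (sub_nonneg.2 hmr1) (sub_nonneg.2 hmr2)]
    calc (k:ℝ) ^ 2 * B k ≤ 4 * ((∑ i ∈ Finset.Icc m k, ((i:ℝ) + 1)) * B k) := by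
          have := mul_le_mul_of_nonneg_right hcard (hB0 k)
          nlinarith
      _ ≤ 4 * ∑' i, W (i + m) := by
          have := le_trans hsum1 htailge
          linarith
  have hdivtop : Filter.Tendsto (fun k : ℕ => k / 2) Filter.atTop Filter.atTop := by
    apply Filter.tendsto_atTop_atTop.2
    intro b
    exact ⟨2 * b, fun n hn => by omega⟩
  have hcomp : Filter.Tendsto (fun k : ℕ => 4 * ∑' i, W (i + k / 2))
      Filter.atTop (nhds 0) := by
    have h := (htail.comp hdivtop).const_mul (4:ℝ)
    simpa using h
  have hshow : Filter.Tendsto (fun k : ℕ => (k:ℝ) ^ 2 * B k) Filter.atTop (nhds 0) := by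
    apply tendsto_of_tendsto_of_tendsto_of_le_of_le' tendsto_const_nhds hcomp
    · exact Filter.Eventually.of_forall (fun k => mul_nonneg (sq_nonneg _) (hB0 k))
    · filter_upwards [Filter.eventually_ge_atTop 1] with k hk
      exact hkey k hk
  exact hshow

end NAGmain
end

section
/- Under NAG with L-smooth convex f, 0 < s ≤ 1/L and r ≥ 2, the iterates x_k satisfy f(x_k) - f(x*) ≤ r²‖x_0 - x*‖² / (2sk(k+r)) for all k ≥ 1. -/
open scoped RealInnerProductSpace

lemma aux_convex {d : ℕ} {f : EuclideanSpace ℝ (Fin d) → ℝ}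
    {g : EuclideanSpace ℝ (Fin d) → EuclideanSpace ℝ (Fin d)}
    (hconv : ConvexOn ℝ Set.univ f) (hgrad : ∀ z, HasGradientAt f (g z) z)
    (a b : EuclideanSpace ℝ (Fin d)) : f a + ⟪g a, b - a⟫ ≤ f b := by
  set c : ℝ → EuclideanSpace ℝ (Fin d) := fun t => a + t • (b - a) with hc
  have hcder : ∀ t : ℝ, HasDerivAt c (b - a) t := by
    intro t
    simpa [hc] using ((hasDerivAt_id t).smul_const (b - a)).const_add a
  have hφ : ∀ t : ℝ, HasDerivAt (f ∘ c) ⟪g (c t), b - a⟫ t := by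
    intro t
    have h1 : HasFDerivAt f (InnerProductSpace.toDual ℝ _ (g (c t))) (c t) :=
      hasGradientAt_iff_hasFDerivAt.mp (hgrad (c t))
    simpa using h1.comp_hasDerivAt t (hcder t)
  have hφconv : ConvexOn ℝ Set.univ (f ∘ c) := by
    have h := hconv.comp_affineMap (AffineMap.lineMap a b : ℝ →ᵃ[ℝ] _)
    simp only [Set.preimage_univ] at h
    have : f ∘ c = f ∘ (AffineMap.lineMap a b : ℝ →ᵃ[ℝ] _) := by
      funext t
      simp only [hc, Function.comp, AffineMap.lineMap_apply_module]
      congr 1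
      module
    rw [this]
    exact h
  have hsl := hφconv.le_slope_of_hasDerivAt (Set.mem_univ (0:ℝ)) (Set.mem_univ (1:ℝ))
    one_pos (hφ 0)
  have hc0 : c 0 = a := by simp [hc]
  have hc1 : c 1 = b := by simp only [hc, one_smul]; abel
  have heq : slope (f ∘ c) 0 1 = f b - f a := by
    simp [slope_def_field, Function.comp, hc0, hc1]
  rw [heq, hc0] at hsl
  linarith [hsl]

lemma aux_descent {d : ℕ} {f : EuclideanSpace ℝ (Fin d) → ℝ}
    {g : EuclideanSpace ℝ (Fin d) → EuclideanSpace ℝ (Fin d)} {L : ℝ} (hL : 0 < L)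
    (hgrad : ∀ z, HasGradientAt f (g z) z)
    (hlip : ∀ z w, ‖g z - g w‖ ≤ L * ‖z - w‖)
    (a b : EuclideanSpace ℝ (Fin d)) :
    f b ≤ f a + ⟪g a, b - a⟫ + L / 2 * ‖b - a‖ ^ 2 := by
  set v := b - a with hv
  set c : ℝ → EuclideanSpace ℝ (Fin d) := fun t => a + t • v with hc
  have hcder : ∀ t : ℝ, HasDerivAt c v t := by
    intro t
    simpa [hc] using ((hasDerivAt_id t).smul_const v).const_add a
  have hφ : ∀ t : ℝ, HasDerivAt (fun u => f (c u)) ⟪g (c t), v⟫ t := by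
    intro t
    have h1 : HasFDerivAt f (InnerProductSpace.toDual ℝ _ (g (c t))) (c t) :=
      hasGradientAt_iff_hasFDerivAt.mp (hgrad (c t))
    simpa [Function.comp_def] using h1.comp_hasDerivAt t (hcder t)
  have hgcont : Continuous g := by
    have hlipg : LipschitzWith (Real.toNNReal L) g := by
      apply LipschitzWith.of_dist_le_mul
      intro u w
      rw [dist_eq_norm, dist_eq_norm, Real.coe_toNNReal L hL.le]
      exact hlip u w
    exact hlipg.continuous
  have hccont : Continuous c := by
    exact continuous_const.add (continuous_id.smul continuous_const)
  have hcont : Continuous fun t => ⟪g (c t), v⟫ :=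
    (hgcont.comp hccont).inner continuous_const
  have hint : f (c 1) - f (c 0) = ∫ t in (0:ℝ)..1, ⟪g (c t), v⟫ :=
    (intervalIntegral.integral_eq_sub_of_hasDerivAt (fun t _ => hφ t)
      (hcont.intervalIntegrable 0 1)).symm
  have hmono : (∫ t in (0:ℝ)..1, ⟪g (c t), v⟫)
      ≤ ∫ t in (0:ℝ)..1, (⟪g a, v⟫ + (L * ‖v‖ ^ 2) * t) := by
    apply intervalIntegral.integral_mono_on zero_le_one (hcont.intervalIntegrable 0 1)
      (Continuous.intervalIntegrable (by fun_prop) 0 1)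
    intro t ht
    have h1 : ⟪g (c t), v⟫ - ⟪g a, v⟫ = ⟪g (c t) - g a, v⟫ :=
      (inner_sub_left _ _ _).symm
    have h2 : ⟪g (c t) - g a, v⟫ ≤ ‖g (c t) - g a‖ * ‖v‖ := real_inner_le_norm _ _
    have h3 : ‖g (c t) - g a‖ ≤ L * (t * ‖v‖) := by
      have h4 := hlip (c t) a
      have h5 : c t - a = t • v := by simp [hc]
      rw [h5, norm_smul, Real.norm_eq_abs, abs_of_nonneg ht.1] at h4
      exact h4
    have h6 : ‖g (c t) - g a‖ * ‖v‖ ≤ L * (t * ‖v‖) * ‖v‖ :=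
      mul_le_mul_of_nonneg_right h3 (norm_nonneg v)
    have h7 : ‖v‖ ^ 2 = ‖v‖ * ‖v‖ := sq ‖v‖
    nlinarith [h1, h2, h6]
  have hval : (∫ t in (0:ℝ)..1, (⟪g a, v⟫ + (L * ‖v‖ ^ 2) * t))
      = ⟪g a, v⟫ + L / 2 * ‖v‖ ^ 2 := by
    rw [intervalIntegral.integral_add (intervalIntegrable_const)
      (Continuous.intervalIntegrable (by fun_prop) 0 1),
      intervalIntegral.integral_const_mul, integral_id]
    simp
    ring
  have hc0 : c 0 = a := by simp [hc]
  have hc1 : c 1 = b := by simp only [hc, one_smul, hv]; abel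
  rw [hc0, hc1] at hint
  linarith [hint, hmono.trans_eq hval]

set_option maxHeartbeats 1000000 in
theorem stmt_12 {d : ℕ} (f : EuclideanSpace ℝ (Fin d) → ℝ)
    (g : EuclideanSpace ℝ (Fin d) → EuclideanSpace ℝ (Fin d)) (L : ℝ) (hL : 0 < L)
    (hconv : ConvexOn ℝ Set.univ f)
    (hgrad : ∀ z, HasGradientAt f (g z) z)
    (hlip : ∀ z w, ‖g z - g w‖ ≤ L * ‖z - w‖)
    (xs : EuclideanSpace ℝ (Fin d)) (hmin : ∀ z, f xs ≤ f z)
    (s r : ℝ) (hs : 0 < s) (hsL : s ≤ 1 / L) (hr : 2 ≤ r)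
    (x y : ℕ → EuclideanSpace ℝ (Fin d))
    (hx0 : x 0 = y 0)
    (hx : ∀ k : ℕ, x (k + 1) = y k - s • g (y k))
    (hy : ∀ k : ℕ, y (k + 1) = x (k + 1) + (((k : ℝ)) / ((k : ℝ) + r + 1)) • (x (k + 1) - x k)) :
    ∀ k : ℕ, 1 ≤ k →
      f (x k) - f xs ≤ r ^ 2 * ‖x 0 - xs‖ ^ 2 / (2 * s * (k : ℝ) * ((k : ℝ) + r)) := by
  have hr0 : (0:ℝ) < r := lt_of_lt_of_le two_pos hr
  have hrne : r ≠ 0 := ne_of_gt hr0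
  set z : ℕ → EuclideanSpace ℝ (Fin d) :=
    fun k => (((k:ℝ) + r)/r) • y k - ((k:ℝ)/r) • x k with hz
  have hz0 : z 0 = x 0 := by
    simp [hz, div_self hrne, hx0]
  have hzrec : ∀ k : ℕ, z (k+1) = z k - ((s * ((k:ℝ) + r))/r) • g (y k) := by
    intro k
    have hd : ((k:ℝ) + r + 1) ≠ 0 := by positivity
    simp only [hz, hy k, hx k]
    push_cast
    match_scalars <;> field_simp <;> ring
  have hLs : L * s ≤ 1 := by
    have := (le_div_iff₀ hL).mp hsL
    linarith
  have hstep : ∀ k : ℕ,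
      2*s*((k:ℝ)+1)*(((k:ℝ)+1)+r) * (f (x (k+1)) - f xs) + r^2 * ‖z (k+1) - xs‖^2
        ≤ 2*s*(k:ℝ)*((k:ℝ)+r) * (f (x k) - f xs) + r^2 * ‖z k - xs‖^2 := by
    intro k
    have hκ : (0:ℝ) ≤ (k:ℝ) := Nat.cast_nonneg k
    have hG : (0:ℝ) ≤ ‖g (y k)‖^2 := sq_nonneg _
    have hB : 0 ≤ f (x (k+1)) - f xs := sub_nonneg.2 (hmin _)
    -- descent inequality
    have hdesc : f (x (k+1)) ≤ f (y k) - s/2 * ‖g (y k)‖^2 := by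
      have h1 := aux_descent hL hgrad hlip (y k) (x (k+1))
      have h2 : x (k+1) - y k = -(s • g (y k)) := by rw [hx k]; abel
      rw [h2, inner_neg_right, real_inner_smul_right,
        real_inner_self_eq_norm_sq, norm_neg, norm_smul, Real.norm_eq_abs,
        abs_of_nonneg hs.le, mul_pow] at h1
      have h8 : 0 ≤ ‖g (y k)‖^2 * (s * (1 - L*s)) :=
        mul_nonneg hG (mul_nonneg hs.le (by linarith))
      nlinarith [h1, h8]
    have hconv1 := aux_convex hconv hgrad (y k) (x k)
    have hconv2 := aux_convex hconv hgrad (y k) xs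
    have hvec : (k:ℝ) • (x k - y k) + r • (xs - y k) = -(r • (z k - xs)) := by
      simp only [hz]
      match_scalars <;> field_simp <;> ring
    have hPcomb : (k:ℝ) * ⟪g (y k), x k - y k⟫ + r * ⟪g (y k), xs - y k⟫
        = -(r * ⟪g (y k), z k - xs⟫) := by
      rw [← real_inner_smul_right, ← real_inner_smul_right, ← inner_add_right, hvec,
        inner_neg_right, real_inner_smul_right]
    have key1 : ((k:ℝ)+r) * (f (x (k+1)) - f xs)
        ≤ (k:ℝ) * (f (x k) - f xs) + r * ⟪g (y k), z k - xs⟫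
          - s/2*((k:ℝ)+r)*‖g (y k)‖^2 := by
      have e1 := mul_le_mul_of_nonneg_left hconv1 hκ
      have e2 := mul_le_mul_of_nonneg_left hconv2 hr0.le
      have e3 := mul_le_mul_of_nonneg_left hdesc (by linarith : (0:ℝ) ≤ (k:ℝ)+r)
      nlinarith [e1, e2, e3, hPcomb]
    have key2 : r^2 * ‖z (k+1) - xs‖^2
        = r^2*‖z k - xs‖^2 - 2*s*((k:ℝ)+r)*r*⟪g (y k), z k - xs⟫
          + s^2*((k:ℝ)+r)^2*‖g (y k)‖^2 := by
      have h5 : z (k+1) - xs = (z k - xs) - ((s*((k:ℝ)+r))/r) • g (y k) := by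
        rw [hzrec k]; abel
      rw [h5, norm_sub_sq_real, real_inner_smul_right, norm_smul, Real.norm_eq_abs,
        mul_pow, sq_abs, real_inner_comm (g (y k)) (z k - xs)]
      have hcr : s*((k:ℝ)+r)/r * r = s*((k:ℝ)+r) := div_mul_cancel₀ _ hrne
      linear_combination ((-2)*r*⟪g (y k), z k - xs⟫
        + (s*((k:ℝ)+r)/r*r + s*((k:ℝ)+r))*‖g (y k)‖^2) * hcr
    have hcoef : ((k:ℝ)+1)*(((k:ℝ)+1)+r) ≤ ((k:ℝ)+r)^2 := by nlinarith [hκ, hr]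
    have hmul := mul_le_mul_of_nonneg_left key1
      (show (0:ℝ) ≤ 2*s*((k:ℝ)+r) by positivity)
    have hBB : 2*s*((k:ℝ)+1)*(((k:ℝ)+1)+r)*(f (x (k+1)) - f xs)
        ≤ 2*s*((k:ℝ)+r)^2*(f (x (k+1)) - f xs) := by
      have h6 : 2*s*((k:ℝ)+1)*(((k:ℝ)+1)+r) ≤ 2*s*((k:ℝ)+r)^2 := by nlinarith [hcoef, hs]
      exact mul_le_mul_of_nonneg_right h6 hB
    linarith [hmul, key2, hBB]
  have hdec : ∀ k : ℕ,
      2*s*(k:ℝ)*((k:ℝ)+r) * (f (x k) - f xs) + r^2 * ‖z k - xs‖^2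
        ≤ r^2 * ‖x 0 - xs‖^2 := by
    intro k
    induction k with
    | zero => simp [hz0]
    | succ n ih =>
      have h9 := (hstep n).trans ih
      push_cast
      linarith [h9]
  intro k hk
  have hκ1 : (1:ℝ) ≤ (k:ℝ) := by exact_mod_cast hk
  have hκpos : (0:ℝ) < (k:ℝ) := by linarith
  have hden : 0 < 2 * s * (k:ℝ) * ((k:ℝ) + r) := by positivity
  rw [le_div_iff₀ hden]
  have h2 := hdec k
  linarith [h2, mul_nonneg (sq_nonneg r) (sq_nonneg ‖z k - xs‖)]
end

section
/- Let f be continuously differentiable and convex on ℝ^d with minimizer x*, and let X : [t₀, ∞) → ℝ^d solve Ẍ + ((r+1)/t)Ẋ + [1 + (r+1)√s/(2t)]∇f(X + √s·Ẋ) = 0 with r ≥ 2, s > 0, t₀ = (r+2)√s. Then the Lyapunov function E(t) = [t(t - r√s)/(t - (r+1)√s)]·[t + (r+1)√s/2]·(f(X + √s·Ẋ) - f(x*)) + (1/2)‖tẊ + r(X - x*)‖² is nonincreasing on [t₀, ∞), and in particular f(X(t) + √s·Ẋ(t)) - f(x*) ≤ E(t₀)/t² for all t ≥ t₀. -/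
open InnerProductSpace Set Filter Topology

local notation "⟪" x ", " y "⟫" => @inner ℝ _ _ x y

lemma grad_ineq_s18 {d : ℕ} {f : EuclideanSpace ℝ (Fin d) → ℝ}
    (hconv : ConvexOn ℝ Set.univ f) {x y gx : EuclideanSpace ℝ (Fin d)}
    (hg : HasGradientAt f gx x) : f x + ⟪gx, y - x⟫ ≤ f y := by
  have hinner : HasDerivAt (fun θ : ℝ => x + θ • (y - x)) (y - x) 0 := by
    simpa using ((hasDerivAt_id (0 : ℝ)).smul_const (y - x)).const_add x
  have hg' : HasFDerivAt f (toDual ℝ _ gx) (x + (0 : ℝ) • (y - x)) := by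
    simpa using hg.hasFDerivAt
  have hline : HasDerivAt (fun θ : ℝ => f (x + θ • (y - x))) ⟪gx, y - x⟫ 0 := by
    simpa [InnerProductSpace.toDual_apply_apply, Function.comp_def] using hg'.comp_hasDerivAt 0 hinner
  have htend : Tendsto (slope (fun θ : ℝ => f (x + θ • (y - x))) 0) (𝓝[>] 0)
      (𝓝 ⟪gx, y - x⟫) :=
    (hasDerivAt_iff_tendsto_slope.mp hline).mono_left
      (nhdsWithin_mono _ (fun z hz => ne_of_gt hz))
  have hub : ∀ᶠ θ in 𝓝[>] (0 : ℝ),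
      slope (fun θ : ℝ => f (x + θ • (y - x))) 0 θ ≤ f y - f x := by
    filter_upwards [Ioc_mem_nhdsGT_of_mem ⟨le_refl (0 : ℝ), zero_lt_one⟩] with θ hθ
    have hcomb := hconv.2 (mem_univ x) (mem_univ y) (by linarith [hθ.2] : (0:ℝ) ≤ 1 - θ)
      (le_of_lt hθ.1) (by ring)
    have hpt : (1 - θ) • x + θ • y = x + θ • (y - x) := by module
    rw [hpt] at hcomb
    rw [slope_def_field]
    simp only [smul_eq_mul] at hcomb
    have h0 : f (x + (0:ℝ) • (y - x)) = f x := by norm_num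
    rw [h0, div_le_iff₀ (by linarith [hθ.1] : (0:ℝ) < θ - 0)]
    nlinarith [hcomb]
  have := le_of_tendsto htend hub
  linarith

set_option maxHeartbeats 1600000 in
theorem stmt_18 {d : ℕ} (f : EuclideanSpace ℝ (Fin d) → ℝ)
    (g : EuclideanSpace ℝ (Fin d) → EuclideanSpace ℝ (Fin d))
    (hconv : ConvexOn ℝ Set.univ f)
    (hgrad : ∀ z, HasGradientAt f (g z) z)
    (hcont : Continuous g)
    (xs : EuclideanSpace ℝ (Fin d)) (hmin : ∀ z, f xs ≤ f z)
    (s r : ℝ) (hs : 0 < s) (hr : 2 ≤ r)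
    (t₀ : ℝ) (ht₀ : t₀ = (r + 2) * Real.sqrt s)
    (X X' X'' : ℝ → EuclideanSpace ℝ (Fin d))
    (hX : ∀ t ≥ t₀, HasDerivAt X (X' t) t)
    (hX' : ∀ t ≥ t₀, HasDerivAt X' (X'' t) t)
    (hode : ∀ t ≥ t₀,
      X'' t + ((r + 1) / t) • X' t +
        (1 + (r + 1) * Real.sqrt s / (2 * t)) • g (X t + Real.sqrt s • X' t) = 0) :
    AntitoneOn
      (fun t : ℝ =>
        (t * (t - r * Real.sqrt s) / (t - (r + 1) * Real.sqrt s)) *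
            (t + (r + 1) * Real.sqrt s / 2) * (f (X t + Real.sqrt s • X' t) - f xs) +
          (1 / 2) * ‖t • X' t + r • (X t - xs)‖ ^ 2)
      (Set.Ici t₀) ∧
    ∀ t ≥ t₀,
      f (X t + Real.sqrt s • X' t) - f xs ≤
        ((t₀ * (t₀ - r * Real.sqrt s) / (t₀ - (r + 1) * Real.sqrt s)) *
            (t₀ + (r + 1) * Real.sqrt s / 2) * (f (X t₀ + Real.sqrt s • X' t₀) - f xs) +
          (1 / 2) * ‖t₀ • X' t₀ + r • (X t₀ - xs)‖ ^ 2) / t ^ 2 := by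
  set σ := Real.sqrt s with hσdef
  have hσ : 0 < σ := Real.sqrt_pos.mpr hs
  have ht₀pos : 0 < t₀ := by rw [ht₀]; nlinarith
  have key : ∀ t, t₀ ≤ t → ∃ e',
      HasDerivAt (fun t : ℝ =>
        (t * (t - r * σ) / (t - (r + 1) * σ)) *
            (t + (r + 1) * σ / 2) * (f (X t + σ • X' t) - f xs) +
          (1 / 2) * ‖t • X' t + r • (X t - xs)‖ ^ 2) e' t ∧ e' ≤ 0 := by
    intro t ht
    have ht0 : 0 < t := lt_of_lt_of_le ht₀pos ht
    have htt : (r + 2) * σ ≤ t := by rw [ht₀] at ht; linarith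
    have hD : 0 < t - (r + 1) * σ := by nlinarith
    have hDa : 0 < t - r * σ := by nlinarith
    have hb2 : 0 < t + (r + 1) * σ / 2 := by nlinarith
    have hXt := hX t ht
    have hX't := hX' t ht
    have hvder : HasDerivAt (fun τ => X τ + σ • X' τ) (X' t + σ • X'' t) t :=
      hXt.add (hX't.const_smul σ)
    have hg' : HasFDerivAt f (toDual ℝ _ (g (X t + σ • X' t))) (X t + σ • X' t) :=
      (hgrad _).hasFDerivAt
    have hfv : HasDerivAt (fun τ => f (X τ + σ • X' τ))
        ⟪g (X t + σ • X' t), X' t + σ • X'' t⟫ t := by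
      simpa [InnerProductSpace.toDual_apply_apply, Function.comp_def] using hg'.comp_hasDerivAt t hvder
    have hwder : HasDerivAt (fun τ : ℝ => τ • X' τ + r • (X τ - xs))
        ((t • X'' t + (1 : ℝ) • X' t) + r • X' t) t :=
      ((hasDerivAt_id t).smul hX't).add ((hXt.sub_const xs).const_smul r)
    have hNder : HasDerivAt (fun τ : ℝ => ‖τ • X' τ + r • (X τ - xs)‖ ^ 2)
        (⟪t • X' t + r • (X t - xs), (t • X'' t + (1 : ℝ) • X' t) + r • X' t⟫
          + ⟪(t • X'' t + (1 : ℝ) • X' t) + r • X' t, t • X' t + r • (X t - xs)⟫) t := by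
      have h2 := HasDerivAt.inner (𝕜 := ℝ) hwder hwder
      have heq : (fun τ : ℝ => ‖τ • X' τ + r • (X τ - xs)‖ ^ 2)
          = fun τ : ℝ => ⟪τ • X' τ + r • (X τ - xs), τ • X' τ + r • (X τ - xs)⟫ := by
        funext τ; exact (real_inner_self_eq_norm_sq _).symm
      rw [heq]; exact h2
    have hA : HasDerivAt
        (fun τ : ℝ => τ * (τ - r * σ) / (τ - (r + 1) * σ) * (τ + (r + 1) * σ / 2))
        ((((1 * (t - r * σ) + t * 1) * (t - (r + 1) * σ) - t * (t - r * σ) * 1)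
            / (t - (r + 1) * σ) ^ 2) * (t + (r + 1) * σ / 2)
          + t * (t - r * σ) / (t - (r + 1) * σ) * 1) t :=
      ((((hasDerivAt_id t).mul ((hasDerivAt_id t).sub_const (r * σ))).div
        ((hasDerivAt_id t).sub_const ((r + 1) * σ)) hD.ne').mul
        ((hasDerivAt_id t).add_const ((r + 1) * σ / 2)))
    have hE := (hA.mul (hfv.sub_const (f xs))).add (hNder.const_mul (1 / 2 : ℝ))
    refine ⟨_, hE, ?_⟩
    -- now the scalar inequality
    set G := g (X t + σ • X' t) with hG
    have hX''eq : X'' t = -((1 + (r + 1) * σ / (2 * t)) • G) - ((r + 1) / t) • X' t := by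
      have h0 := hode t ht
      exact eq_sub_of_add_eq (eq_neg_of_add_eq_zero_left h0)
    have hw'vec : t • X'' t + (1 : ℝ) • X' t + r • X' t = -((t + (r + 1) * σ / 2) • G) := by
      rw [hX''eq]; match_scalars <;> field_simp <;> ring
    have hvvec : X' t + σ • X'' t
        = ((t - (r + 1) * σ) / t) • X' t - (σ * (1 + (r + 1) * σ / (2 * t))) • G := by
      rw [hX''eq]; match_scalars <;> field_simp <;> ring
    have hIv : ⟪G, X' t + σ • X'' t⟫
        = ((t - (r + 1) * σ) / t) * ⟪G, X' t⟫
          - σ * (1 + (r + 1) * σ / (2 * t)) * ⟪G, G⟫ := by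
      rw [hvvec, inner_sub_right, real_inner_smul_right, real_inner_smul_right]
    have hGw : ⟪G, t • X' t + r • (X t - xs)⟫
        = (t - r * σ) * ⟪G, X' t⟫ + r * ⟪G, (X t + σ • X' t) - xs⟫ := by
      have hxt : t • X' t + r • (X t - xs)
          = (t - r * σ) • X' t + r • ((X t + σ • X' t) - xs) := by module
      rw [hxt, inner_add_right, real_inner_smul_right, real_inner_smul_right]
    have hsum : ⟪t • X' t + r • (X t - xs), (t • X'' t + (1 : ℝ) • X' t) + r • X' t⟫
          + ⟪(t • X'' t + (1 : ℝ) • X' t) + r • X' t, t • X' t + r • (X t - xs)⟫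
        = -2 * ((t + (r + 1) * σ / 2)
            * ((t - r * σ) * ⟪G, X' t⟫ + r * ⟪G, (X t + σ • X' t) - xs⟫)) := by
      rw [hw'vec]
      have hwG : ⟪t • X' t + r • (X t - xs), -((t + (r + 1) * σ / 2) • G)⟫
          = -((t + (r + 1) * σ / 2) * ⟪G, t • X' t + r • (X t - xs)⟫) := by
        rw [inner_neg_right, real_inner_smul_right,
          real_inner_comm (t • X' t + r • (X t - xs)) G]
      have hwG2 : ⟪-((t + (r + 1) * σ / 2) • G), t • X' t + r • (X t - xs)⟫
          = -((t + (r + 1) * σ / 2) * ⟪G, t • X' t + r • (X t - xs)⟫) := by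
        rw [inner_neg_left, real_inner_smul_left]
      rw [hwG, hwG2, hGw]
      ring
    rw [hIv, hsum]
    set I1 := ⟪G, X' t⟫ with hI1
    set I2 := ⟪G, (X t + σ • X' t) - xs⟫ with hI2
    set Gn := ⟪G, G⟫ with hGn
    set F := f (X t + σ • X' t) - f xs with hF
    have hFnn : 0 ≤ F := sub_nonneg.mpr (hmin _)
    have hGnnn : 0 ≤ Gn := real_inner_self_nonneg
    have hFI2 : F ≤ I2 := by
      have h1 := grad_ineq_s18 hconv (hgrad (X t + σ • X' t)) (y := xs)
      have h2 : ⟪G, xs - (X t + σ • X' t)⟫ = -I2 := by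
        rw [show xs - (X t + σ • X' t) = -((X t + σ • X' t) - xs) by abel, inner_neg_right]
      rw [h2] at h1
      simp only [hF]; linarith
    have hrb0 : 0 ≤ r * (t + (r + 1) * σ / 2) := by nlinarith
    have hσc : 0 ≤ σ * (1 + (r + 1) * σ / (2 * t)) := by
      have h1 : 0 ≤ (r + 1) * σ / (2 * t) := by
        apply div_nonneg (by nlinarith) (by linarith)
      nlinarith
    have hA0 : 0 ≤ t * (t - r * σ) / (t - (r + 1) * σ) * (t + (r + 1) * σ / 2) :=
      mul_nonneg (div_nonneg (mul_nonneg ht0.le hDa.le) hD.le) hb2.le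
    have hAcI : (t * (t - r * σ) / (t - (r + 1) * σ) * (t + (r + 1) * σ / 2)
          * ((t - (r + 1) * σ) / t)) * I1
        = ((t + (r + 1) * σ / 2) * (t - r * σ)) * I1 := by
      have hAc : t * (t - r * σ) / (t - (r + 1) * σ) * (t + (r + 1) * σ / 2)
          * ((t - (r + 1) * σ) / t) = (t + (r + 1) * σ / 2) * (t - r * σ) := by
        rw [div_mul_eq_mul_div, div_mul_div_comm, div_eq_iff (mul_ne_zero hD.ne' ht0.ne')]; ring
      rw [hAc]
    have hA'le : (((1 * (t - r * σ) + t * 1) * (t - (r + 1) * σ) - t * (t - r * σ) * 1)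
            / (t - (r + 1) * σ) ^ 2) * (t + (r + 1) * σ / 2)
          + t * (t - r * σ) / (t - (r + 1) * σ) * 1 ≤ r * (t + (r + 1) * σ / 2) := by
      have hQ : r * (t + (r + 1) * σ / 2)
          - ((((1 * (t - r * σ) + t * 1) * (t - (r + 1) * σ) - t * (t - r * σ) * 1)
              / (t - (r + 1) * σ) ^ 2) * (t + (r + 1) * σ / 2)
            + t * (t - r * σ) / (t - (r + 1) * σ) * 1)
          = ((r - 2) * t ^ 3 + σ * (-3 * r ^ 2 + 4 * r + 5) / 2 * t ^ 2
              - σ ^ 2 * (r + 1) * (r - 1) * t + σ ^ 3 * r ^ 2 * (r + 1) ^ 2 / 2)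
            / (t - (r + 1) * σ) ^ 2 := by
        field_simp; ring
      have hq : 0 ≤ r - 2 := by linarith
      have hu : 0 ≤ t - (r + 2) * σ := by linarith
      have hQnum : 0 ≤ (r - 2) * t ^ 3 + σ * (-3 * r ^ 2 + 4 * r + 5) / 2 * t ^ 2
          - σ ^ 2 * (r + 1) * (r - 1) * t + σ ^ 3 * r ^ 2 * (r + 1) ^ 2 / 2 := by
        have hid : (r - 2) * t ^ 3 + σ * (-3 * r ^ 2 + 4 * r + 5) / 2 * t ^ 2
              - σ ^ 2 * (r + 1) * (r - 1) * t + σ ^ 3 * r ^ 2 * (r + 1) ^ 2 / 2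
            = 14 * σ ^ 3 + (t - (r + 2) * σ) * σ ^ 2 + (t - (r + 2) * σ) ^ 2 * σ / 2
              + 15 * (r - 2) * σ ^ 3 + 13 * (r - 2) * (t - (r + 2) * σ) * σ ^ 2
              + 8 * (r - 2) * (t - (r + 2) * σ) ^ 2 * σ + (r - 2) * (t - (r + 2) * σ) ^ 3
              + 3 * (r - 2) ^ 2 * σ ^ 3 + 3 * (r - 2) ^ 2 * (t - (r + 2) * σ) * σ ^ 2
              + 3 / 2 * (r - 2) ^ 2 * (t - (r + 2) * σ) ^ 2 * σ := by ring
        rw [hid]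
        have l1 : 0 ≤ (t - (r + 2) * σ) ^ 2 * σ := mul_nonneg (sq_nonneg _) hσ.le
        have l2 : 0 ≤ (r - 2) * (t - (r + 2) * σ) * σ ^ 2 :=
          mul_nonneg (mul_nonneg hq hu) (sq_nonneg _)
        have l3 : 0 ≤ (r - 2) * (t - (r + 2) * σ) ^ 2 * σ :=
          mul_nonneg (mul_nonneg hq (sq_nonneg _)) hσ.le
        have l4 : 0 ≤ (r - 2) * (t - (r + 2) * σ) ^ 3 :=
          mul_nonneg hq (pow_nonneg hu 3)
        have l5 : 0 ≤ (r - 2) ^ 2 * σ ^ 3 := mul_nonneg (sq_nonneg _) (pow_nonneg hσ.le 3)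
        have l6 : 0 ≤ (r - 2) ^ 2 * (t - (r + 2) * σ) * σ ^ 2 :=
          mul_nonneg (mul_nonneg (sq_nonneg _) hu) (sq_nonneg _)
        have l7 : 0 ≤ (r - 2) ^ 2 * (t - (r + 2) * σ) ^ 2 * σ :=
          mul_nonneg (mul_nonneg (sq_nonneg _) (sq_nonneg _)) hσ.le
        have l8 : 0 ≤ (t - (r + 2) * σ) * σ ^ 2 := mul_nonneg hu (sq_nonneg _)
        have l9 : 0 ≤ (r - 2) * σ ^ 3 := mul_nonneg hq (pow_nonneg hσ.le 3)
        have l10 : 0 ≤ σ ^ 3 := pow_nonneg hσ.le 3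
        linarith
      nlinarith [div_nonneg hQnum (sq_nonneg (t - (r + 1) * σ)), hQ]
    have step : (((1 * (t - r * σ) + t * 1) * (t - (r + 1) * σ) - t * (t - r * σ) * 1)
            / (t - (r + 1) * σ) ^ 2 * (t + (r + 1) * σ / 2)
          + t * (t - r * σ) / (t - (r + 1) * σ) * 1) * F
        + t * (t - r * σ) / (t - (r + 1) * σ) * (t + (r + 1) * σ / 2)
            * ((t - (r + 1) * σ) / t * I1 - σ * (1 + (r + 1) * σ / (2 * t)) * Gn)
        + 1 / 2 * (-2 * ((t + (r + 1) * σ / 2) * ((t - r * σ) * I1 + r * I2)))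
      = (((1 * (t - r * σ) + t * 1) * (t - (r + 1) * σ) - t * (t - r * σ) * 1)
            / (t - (r + 1) * σ) ^ 2 * (t + (r + 1) * σ / 2)
          + t * (t - r * σ) / (t - (r + 1) * σ) * 1) * F
        - (t * (t - r * σ) / (t - (r + 1) * σ) * (t + (r + 1) * σ / 2))
            * (σ * (1 + (r + 1) * σ / (2 * t))) * Gn
        - (t + (r + 1) * σ / 2) * (r * I2)
        + ((t * (t - r * σ) / (t - (r + 1) * σ) * (t + (r + 1) * σ / 2)
            * ((t - (r + 1) * σ) / t)) * I1
          - ((t + (r + 1) * σ / 2) * (t - r * σ)) * I1) := by ring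
    rw [step, hAcI]
    have b1 := mul_le_mul_of_nonneg_right hA'le hFnn
    have b2 := mul_le_mul_of_nonneg_left hFI2 hrb0
    have b3 : 0 ≤ (t * (t - r * σ) / (t - (r + 1) * σ) * (t + (r + 1) * σ / 2))
        * (σ * (1 + (r + 1) * σ / (2 * t))) * Gn :=
      mul_nonneg (mul_nonneg hA0 hσc) hGnnn
    nlinarith [b1, b2, b3]
  have hanti : AntitoneOn
      (fun t : ℝ =>
        (t * (t - r * σ) / (t - (r + 1) * σ)) *
            (t + (r + 1) * σ / 2) * (f (X t + σ • X' t) - f xs) +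
          (1 / 2) * ‖t • X' t + r • (X t - xs)‖ ^ 2)
      (Set.Ici t₀) := by
    apply antitoneOn_of_deriv_nonpos (convex_Ici t₀)
    · intro x hx
      exact ((key x hx).choose_spec.1).continuousAt.continuousWithinAt
    · intro x hx
      rw [interior_Ici] at hx
      exact ((key x (le_of_lt hx)).choose_spec.1).differentiableAt.differentiableWithinAt
    · intro x hx
      rw [interior_Ici] at hx
      obtain ⟨e', h1, h2⟩ := key x (le_of_lt hx)
      rw [h1.deriv]; exact h2
  refine ⟨hanti, ?_⟩
  intro t ht
  have hEt := hanti (mem_Ici.mpr le_rfl) (mem_Ici.mpr ht) ht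
  simp only [] at hEt
  have ht0 : 0 < t := lt_of_lt_of_le ht₀pos ht
  have htt : (r + 2) * σ ≤ t := by rw [ht₀] at ht; linarith
  have hD : 0 < t - (r + 1) * σ := by nlinarith
  have hFnn : 0 ≤ f (X t + σ • X' t) - f xs := sub_nonneg.mpr (hmin _)
  have hAget : t ^ 2 ≤ t * (t - r * σ) / (t - (r + 1) * σ) * (t + (r + 1) * σ / 2) := by
    rw [div_mul_eq_mul_div, le_div_iff₀ hD]
    have h1 : r * (r + 1) * σ ≤ (r + 3) * t := by
      nlinarith [mul_le_mul_of_nonneg_left htt (show (0:ℝ) ≤ r + 3 by linarith), hσ]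
    nlinarith [mul_nonneg (mul_nonneg ht0.le hσ.le) (sub_nonneg.mpr h1)]
  have hnorm : 0 ≤ (1 / 2 : ℝ) * ‖t • X' t + r • (X t - xs)‖ ^ 2 := by positivity
  have hb := mul_le_mul_of_nonneg_right hAget hFnn
  rw [le_div_iff₀ (pow_pos ht0 2)]
  nlinarith [hEt, hb, hnorm]
end
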